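/- The enrichment function ψ satisfies: (i) ψ(x_k) = 0 and ψ(x_{k+1}) = 0; (ii) its one-sided limits at α are ψ(α⁻) = m₁(α − x_k) and ψ(α⁺) = m₂(α − x_{k+1}); (iii) the jump of its slope is [ψ']_α = m₂ − m₁ = m₁ h_k / (α − x_{k+1} − γ), which is nonzero; and (iv) the jump of its values is [ψ]_α = γ(α − x_{k+1}) / (α − x_{k+1} − γ), which equals 0 if and only if γ = 0. -/

import Mathlib

open Set Filter Topology

/-- Basic properties of the enrichment function `ψ`:
(i) it vanishes at the nodes `x_k` and `x_{k+1}`;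
(ii) its one-sided limits at `α` are `m₁(α - x_k)` and `m₂(α - x_{k+1})`;
(iii) its slope jump is `[ψ']_α = m₂ - m₁ = m₁ h_k/(α - x_{k+1} - γ) ≠ 0`;
(iv) its value jump is `[ψ]_α = γ(α - x_{k+1})/(α - x_{k+1} - γ)`, which is `0` iff `γ = 0`. -/
theorem enrichment_function_properties
    (a b : ℝ) (n : ℕ) (x : ℕ → ℝ) (k : ℕ) (α γ : ℝ)
    (hab : a < b) (hx0 : x 0 = a) (hxn : x n = b)
    (hmono : ∀ i, i < n → x i < x (i + 1)) (hkn : k + 1 ≤ n)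
    (hα1 : x k < α) (hα2 : α < x (k + 1))
    (hγ : α - x (k + 1) - γ ≠ 0) :
    -- the mesh width, slopes, and enrichment function
    let hk : ℝ := x (k + 1) - x k
    let m₁ : ℝ := (α - x (k + 1)) / hk
    let m₂ : ℝ := (α - x k - γ) * (α - x (k + 1)) / (hk * (α - x (k + 1) - γ))
    let ψ : ℝ → ℝ := fun t =>
      if t < x k then 0 else if t < α then m₁ * (t - x k)
      else if t ≤ x (k + 1) then m₂ * (t - x (k + 1)) else 0
    -- (i)
    (ψ (x k) = 0 ∧ ψ (x (k + 1)) = 0) ∧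
    -- (ii) one-sided limits at α
    (Tendsto ψ (𝓝[<] α) (𝓝 (m₁ * (α - x k))) ∧
      Tendsto ψ (𝓝[>] α) (𝓝 (m₂ * (α - x (k + 1))))) ∧
    -- (iii) the slope jump
    (m₂ - m₁ = m₁ * hk / (α - x (k + 1) - γ) ∧ m₂ - m₁ ≠ 0) ∧
    -- (iv) the value jump
    (m₂ * (α - x (k + 1)) - m₁ * (α - x k)
        = γ * (α - x (k + 1)) / (α - x (k + 1) - γ) ∧
      (m₂ * (α - x (k + 1)) - m₁ * (α - x k) = 0 ↔ γ = 0)) := by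
  intro hk m₁ m₂ ψ
  have hxk : x k < x (k + 1) := lt_trans hα1 hα2
  have hhk : hk ≠ 0 := by simp only [hk]; linarith
  have hA : α - x (k + 1) ≠ 0 := by linarith
  refine ⟨⟨?_, ?_⟩, ⟨?_, ?_⟩, ⟨?_, ?_⟩, ?_, ?_⟩
  · simp [ψ, hα1]
  · simp [ψ, not_lt.mpr hxk.le, not_lt.mpr hα2.le]
  · have heq : (fun t : ℝ => m₁ * (t - x k)) =ᶠ[𝓝[<] α] ψ := by
      have : Ioo (x k) α ∈ 𝓝[<] α := Ioo_mem_nhdsLT_of_mem ⟨hα1, le_refl α⟩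
      filter_upwards [this] with t ht
      simp [ψ, not_lt.mpr ht.1.le, ht.2]
    refine Tendsto.congr' heq ?_
    have : ContinuousAt (fun t : ℝ => m₁ * (t - x k)) α := by fun_prop
    exact this.continuousWithinAt.tendsto
  · have heq : (fun t : ℝ => m₂ * (t - x (k + 1))) =ᶠ[𝓝[>] α] ψ := by
      have : Ioo α (x (k + 1)) ∈ 𝓝[>] α := Ioo_mem_nhdsGT_of_mem ⟨le_refl α, hα2⟩
      filter_upwards [this] with t ht
      simp [ψ, not_lt.mpr (le_trans hα1.le ht.1.le), not_lt.mpr ht.1.le, ht.2.le]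
    refine Tendsto.congr' heq ?_
    have : ContinuousAt (fun t : ℝ => m₂ * (t - x (k + 1))) α := by fun_prop
    exact this.continuousWithinAt.tendsto
  · simp only [m₁, m₂, hk]
    field_simp
    ring
  · have : m₂ - m₁ = m₁ * hk / (α - x (k + 1) - γ) := by
      simp only [m₁, m₂, hk]; field_simp; ring
    rw [this]
    simp only [m₁, hk]
    field_simp [sub_ne_zero.mpr hxk.ne']
    exact div_ne_zero hA hγ
  · simp only [m₁, m₂, hk]
    field_simp [sub_ne_zero.mpr hxk.ne']
    ring
  · have : m₂ * (α - x (k + 1)) - m₁ * (α - x k)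
        = γ * (α - x (k + 1)) / (α - x (k + 1) - γ) := by
      simp only [m₁, m₂, hk]; field_simp [sub_ne_zero.mpr hxk.ne']; ring
    rw [this]
    constructor
    · intro h
      rcases mul_eq_zero.mp ((div_eq_zero_iff.mp h).resolve_right hγ) with h | h
      · exact h
      · exact absurd h hA
    · intro h; simp [h]
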